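/- With the notation of the resultant interpolation setting (p of degree n, q of degree m, N = m+n+1 distinct nodes with p(x_j)q(x_j) ≠ 0, τ̃_k = ∑_j (q(x_j)/p(x_j)) x_j^k / W'(x_j)), the Hankel determinants satisfy H_{n+1}({τ̃}) = (q_0/p_0) · H_n({τ̃}); in particular H_{n+1}({τ̃}) = ((−1)^{mn+n(n+1)/2} q_0 / ∏_{j=1}^N p(x_j)) · Res(p, q). -/

import Mathlib

open Finset Polynomial

/-- `Wd x j = ∏_{i ≠ j} (x j - x i)`, i.e. `W'(x_j)` where `W(x) = ∏ (x - x_i)`. -/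
noncomputable def Wd {N : ℕ} (x : Fin N → ℂ) (j : Fin N) : ℂ :=
  ∏ i ∈ Finset.univ.erase j, (x j - x i)

/-- The `k`-th Hankel determinant of the sequence `{c_j}`. -/
noncomputable def Hdet (c : ℕ → ℂ) (k : ℕ) : ℂ :=
  Matrix.det (Matrix.of fun i j : Fin k => c ((i : ℕ) + (j : ℕ)))

/-- The resultant of `p` and `q` over `ℂ`:
`Res(p,q) = p₀^m ∏ q(λ)` over the roots `λ` of `p` counted with multiplicity. -/
noncomputable def Res (p q : Polynomial ℂ) : ℂ :=
  p.leadingCoeff ^ q.natDegree * (p.roots.map fun l => q.eval l).prod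

lemma Wd_ne_zero {N : ℕ} {x : Fin N → ℂ} (hx : Function.Injective x) (j : Fin N) :
    Wd x j ≠ 0 := by
  refine Finset.prod_ne_zero_iff.2 fun i hi => ?_
  have : i ≠ j := (Finset.mem_erase.1 hi).1
  exact sub_ne_zero.2 fun h => this (hx h.symm)

lemma lagrange_sum {ι : Type} [Fintype ι] [DecidableEq ι] (y : ι → ℂ) (hy : Function.Injective y)
    (F : Polynomial ℂ) (hF : F.degree < Fintype.card ι) :
    ∑ j, F.eval (y j) / ∏ i ∈ Finset.univ.erase j, (y j - y i) = F.coeff (Fintype.card ι - 1) := by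
  classical
  have hcard : (Finset.univ : Finset ι).card = Fintype.card ι := rfl
  have hinj : Set.InjOn y (Finset.univ : Finset ι) := hy.injOn
  have hF' : F.degree < ((Finset.univ : Finset ι).card : ℕ) := by rwa [hcard]
  have hrep := Lagrange.eq_interpolate hinj hF'
  -- coeff at card - 1
  have hco : F.coeff (Fintype.card ι - 1)
      = ∑ j, F.eval (y j) * (Lagrange.basis Finset.univ y j).coeff (Fintype.card ι - 1) := by
    conv_lhs => rw [hrep]
    rw [Lagrange.interpolate_apply, Polynomial.finset_sum_coeff]
    exact Finset.sum_congr rfl fun j _ => by rw [Polynomial.coeff_C_mul]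
  rw [hco]
  refine Finset.sum_congr rfl fun j _ => ?_
  have hbasis : (Lagrange.basis Finset.univ y j) =
      Polynomial.C (∏ i ∈ Finset.univ.erase j, (y j - y i)⁻¹) *
        ∏ i ∈ Finset.univ.erase j, (Polynomial.X - Polynomial.C (y i)) := by
    rw [Lagrange.basis, map_prod, ← Finset.prod_mul_distrib]
    exact Finset.prod_congr rfl fun i _ => rfl
  have hmonic : (∏ i ∈ Finset.univ.erase j, (Polynomial.X - Polynomial.C (y i))).Monic :=
    Polynomial.monic_prod_of_monic _ _ fun i _ => Polynomial.monic_X_sub_C _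
  have hdeg : (∏ i ∈ Finset.univ.erase j, (Polynomial.X - Polynomial.C (y i))).natDegree
      = Fintype.card ι - 1 := by
    rw [Polynomial.natDegree_prod _ _ fun i _ => Polynomial.X_sub_C_ne_zero _]
    simp [Finset.card_erase_of_mem, hcard]
  have hcoeff1 : (∏ i ∈ Finset.univ.erase j, (Polynomial.X - Polynomial.C (y i))).coeff
      (Fintype.card ι - 1) = 1 := by
    have := hmonic.leadingCoeff
    rwa [Polynomial.leadingCoeff, hdeg] at this
  rw [hbasis, Polynomial.coeff_C_mul, hcoeff1, mul_one, div_eq_mul_inv, ← Finset.prod_inv_distrib]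

lemma prod_erase_inl {ι κ : Type} [Fintype ι] [Fintype κ] [DecidableEq ι] [DecidableEq κ]
    (f : ι ⊕ κ → ℂ) (j : ι) :
    ∏ w ∈ Finset.univ.erase (Sum.inl j), f w
      = (∏ i ∈ Finset.univ.erase j, f (Sum.inl i)) * ∏ l, f (Sum.inr l) := by
  have hset : Finset.univ.erase (Sum.inl j : ι ⊕ κ)
      = ((Finset.univ.erase j).map ⟨Sum.inl, Sum.inl_injective⟩)
        ∪ Finset.univ.map ⟨Sum.inr, Sum.inr_injective⟩ := by
    ext w
    cases w <;> simp
  rw [hset, Finset.prod_union, Finset.prod_map, Finset.prod_map]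
  · rfl
  · simp [Finset.disjoint_left]

lemma prod_erase_inr {ι κ : Type} [Fintype ι] [Fintype κ] [DecidableEq ι] [DecidableEq κ]
    (f : ι ⊕ κ → ℂ) (l : κ) :
    ∏ w ∈ Finset.univ.erase (Sum.inr l), f w
      = (∏ i, f (Sum.inl i)) * ∏ l' ∈ Finset.univ.erase l, f (Sum.inr l') := by
  have hset : Finset.univ.erase (Sum.inr l : ι ⊕ κ)
      = (Finset.univ.map ⟨Sum.inl, Sum.inl_injective⟩)
        ∪ ((Finset.univ.erase l).map ⟨Sum.inr, Sum.inr_injective⟩) := by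
    ext w
    cases w <;> simp
  rw [hset, Finset.prod_union, Finset.prod_map, Finset.prod_map]
  · rfl
  · simp [Finset.disjoint_left]

lemma prod_erase_sign (n : ℕ) (a : Fin n → ℂ) :
    ∏ l, ∏ l' ∈ Finset.univ.erase l, (a l - a l')
      = (-1 : ℂ)^(n*(n-1)/2) * (∏ i, ∏ j ∈ Finset.Ioi i, (a j - a i))^2 := by
  have key := Finset.prod_prod_Ioi_mul_eq_prod_prod_off_diag (fun j i => a i - a j)
  simp_rw [Finset.compl_singleton] at key
  have key2 : (∏ l, ∏ l' ∈ Finset.univ.erase l, (a l - a l'))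
      = ∏ i : Fin n, ∏ j ∈ Finset.Ioi i, ((a i - a j) * (a j - a i)) := by
    convert key.symm using 2 with l
  rw [key2]
  have : ∀ i : Fin n, ∏ j ∈ Finset.Ioi i, ((a i - a j) * (a j - a i))
      = (-1 : ℂ)^(Finset.Ioi i).card * ∏ j ∈ Finset.Ioi i, ((a j - a i) * (a j - a i)) := by
    intro i
    calc ∏ j ∈ Finset.Ioi i, ((a i - a j) * (a j - a i))
        = ∏ j ∈ Finset.Ioi i, ((-1 : ℂ) * ((a j - a i) * (a j - a i))) :=
          Finset.prod_congr rfl fun j _ => by ring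
      _ = (-1 : ℂ)^(Finset.Ioi i).card * ∏ j ∈ Finset.Ioi i, ((a j - a i) * (a j - a i)) := by
          rw [Finset.prod_mul_distrib, Finset.prod_const]
  simp_rw [this]
  rw [Finset.prod_mul_distrib, Finset.prod_pow_eq_pow_sum]
  have hsum : ∑ i : Fin n, (Finset.Ioi i).card = n*(n-1)/2 := by
    have h1 : ∀ i : Fin n, (Finset.Ioi i).card = n - 1 - (i : ℕ) := fun i => Fin.card_Ioi i
    simp_rw [h1]
    rw [Fin.sum_univ_eq_sum_range (fun i => n - 1 - i) n]
    rw [Finset.sum_range_reflect (fun i => i) n]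
    have := Finset.sum_range_id_mul_two n
    omega
  rw [hsum]
  congr 1
  simp_rw [sq, ← Finset.prod_mul_distrib]

lemma genG (n m N : ℕ) (hN : N = m + n + 1) (q : Polynomial ℂ) (hq : q ≠ 0)
    (hqdeg : q.natDegree = m)
    (p0 : ℂ) (hp0 : p0 ≠ 0) (x : Fin N → ℂ) (hx : Function.Injective x)
    (a : Fin n → ℂ) (ha : Function.Injective a) (hax : ∀ l j, a l ≠ x j)
    (t : ℕ → ℂ)
    (ht : ∀ k, t k = ∑ j, (q.eval (x j) / (p0 * ∏ l, (x j - a l))) * x j ^ k / Wd x j) :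
    p0 * Hdet t (n+1) = q.coeff m * Hdet t n ∧
    Hdet t (n+1) * ∏ j, (p0 * ∏ l, (x j - a l)) =
      (-1 : ℂ)^(m*n + n*(n+1)/2) * q.coeff m * p0^m * ∏ l, q.eval (a l) := by
  classical
  subst hN
  -- nonvanishing facts
  have hW : ∀ j, Wd x j ≠ 0 := Wd_ne_zero hx
  have hPj : ∀ j, (∏ l, (x j - a l)) ≠ 0 := fun j =>
    Finset.prod_ne_zero_iff.2 fun l _ => sub_ne_zero.2 fun h => hax l j h.symm
  have hXl : ∀ l, (∏ l' ∈ Finset.univ.erase l, (a l - a l')) ≠ 0 := fun l =>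
    Finset.prod_ne_zero_iff.2 fun l' hl' =>
      sub_ne_zero.2 fun h => (Finset.mem_erase.1 hl').1 (ha h.symm)
  have hYl : ∀ l, (∏ j, (a l - x j)) ≠ 0 := fun l =>
    Finset.prod_ne_zero_iff.2 fun j _ => sub_ne_zero.2 (hax l j)
  -- the weights at the roots
  set d : Fin n → ℂ := fun l =>
    -(q.eval (a l)) / (p0 * (∏ l' ∈ Finset.univ.erase l, (a l - a l')) * ∏ j, (a l - x j))
    with hd
  -- key formula for the moments
  have E1 : ∀ k : ℕ, k ≤ 2*n →
      t k = (if k = 2*n then q.coeff m / p0 else 0) + ∑ l, d l * a l ^ k := by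
    intro k hk
    set y : Fin (m+n+1) ⊕ Fin n → ℂ := Sum.elim x a with hy
    have hyinj : Function.Injective y := by
      rintro (i | l) (i' | l') h <;> simp only [hy, Sum.elim_inl, Sum.elim_inr] at h
      · exact congrArg Sum.inl (hx h)
      · exact absurd h.symm (hax l' i)
      · exact absurd h (hax l i')
      · exact congrArg Sum.inr (ha h)
    have hcard : Fintype.card (Fin (m+n+1) ⊕ Fin n) = (m+n+1) + n := by simp
    set F : Polynomial ℂ := q * Polynomial.X ^ k with hF
    have hFne : F ≠ 0 := mul_ne_zero hq (pow_ne_zero _ Polynomial.X_ne_zero)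
    have hFdeg : F.natDegree = m + k := by
      rw [hF, Polynomial.natDegree_mul hq (pow_ne_zero _ Polynomial.X_ne_zero),
        Polynomial.natDegree_X_pow, hqdeg]
    have hdeg : F.degree < Fintype.card (Fin (m+n+1) ⊕ Fin n) := by
      rw [hcard, Polynomial.degree_eq_natDegree hFne, hFdeg]
      exact_mod_cast (by omega : m + k < (m+n+1) + n)
    have S := lagrange_sum y hyinj F hdeg
    rw [Fintype.sum_sum_type] at S
    rw [hcard] at S
    -- identify the two sums
    have hinl : ∀ j : Fin (m+n+1),
        F.eval (y (Sum.inl j)) / ∏ w ∈ Finset.univ.erase (Sum.inl j), (y (Sum.inl j) - y w)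
          = p0 * ((q.eval (x j) / (p0 * ∏ l, (x j - a l))) * x j ^ k / Wd x j) := by
      intro j
      rw [prod_erase_inl (fun w => y (Sum.inl j) - y w) j]
      simp only [hy, Sum.elim_inl, Sum.elim_inr, hF, Polynomial.eval_mul,
        Polynomial.eval_pow, Polynomial.eval_X]
      rw [show (∏ i ∈ Finset.univ.erase j, (x j - x i)) = Wd x j from rfl]
      field_simp [hp0, hW j, hPj j]
    have hinr : ∀ l : Fin n,
        F.eval (y (Sum.inr l)) / ∏ w ∈ Finset.univ.erase (Sum.inr l), (y (Sum.inr l) - y w)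
          = -(p0 * (d l * a l ^ k)) := by
      intro l
      rw [prod_erase_inr (fun w => y (Sum.inr l) - y w) l]
      simp only [hy, Sum.elim_inl, Sum.elim_inr, hF, Polynomial.eval_mul,
        Polynomial.eval_pow, Polynomial.eval_X, hd]
      field_simp [hp0, hXl l, hYl l]
    simp only [hinl, hinr] at S
    rw [← Finset.mul_sum, Finset.sum_neg_distrib, ← Finset.mul_sum, ← ht k] at S
    have hcoeff : F.coeff ((m+n+1) + n - 1) = if k = 2*n then q.coeff m else 0 := by
      rw [hF, Polynomial.coeff_mul_X_pow']
      rw [if_pos (by omega)]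
      by_cases h2 : k = 2*n
      · rw [if_pos h2]; congr 1; omega
      · rw [if_neg h2]
        exact Polynomial.coeff_eq_zero_of_natDegree_lt (by rw [hqdeg]; omega)
    apply mul_left_cancel₀ hp0
    rw [mul_add]
    have hifp : p0 * (if k = 2*n then q.coeff m / p0 else 0) = (if k = 2*n then q.coeff m else 0) := by
      split_ifs
      · field_simp
      · ring
    rw [hifp]
    rw [hcoeff] at S
    linear_combination S
  -- now the matrix computations
  set Δ : ℂ := ∏ i, ∏ j ∈ Finset.Ioi i, (a j - a i) with hΔ
  have hΔne : Δ ≠ 0 := by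
    refine Finset.prod_ne_zero_iff.2 fun i _ => Finset.prod_ne_zero_iff.2 fun j hj => ?_
    exact sub_ne_zero.2 fun h => absurd (ha h) (ne_of_gt (Finset.mem_Ioi.1 hj))
  set An : Matrix (Fin n) (Fin n) ℂ :=
    Matrix.of (fun i j : Fin n => ∑ l, d l * a l ^ ((i:ℕ)+(j:ℕ))) with hAn
  set A : Matrix (Fin (n+1)) (Fin (n+1)) ℂ :=
    Matrix.of (fun i j : Fin (n+1) => ∑ l, d l * a l ^ ((i:ℕ)+(j:ℕ))) with hA
  have hHn : Hdet t n = An.det := by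
    unfold Hdet
    congr 1
    ext i j
    have hi := i.isLt
    have hj := j.isLt
    simp only [Matrix.of_apply, hAn]
    rw [E1 ((i:ℕ)+(j:ℕ)) (by omega), if_neg (by omega), zero_add]
  have hdetA : A.det = 0 := by
    set C1 : Matrix (Fin (n+1)) (Fin (n+1)) ℂ :=
      Matrix.of (fun i l : Fin (n+1) =>
        if h : (l:ℕ) < n then d ⟨l,h⟩ * a ⟨l,h⟩ ^ (i:ℕ) else 0) with hC1
    set C2 : Matrix (Fin (n+1)) (Fin (n+1)) ℂ :=
      Matrix.of (fun l j : Fin (n+1) =>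
        if h : (l:ℕ) < n then a ⟨l,h⟩ ^ (j:ℕ) else 0) with hC2
    have hfac : A = C1 * C2 := by
      ext i j
      rw [Matrix.mul_apply, Fin.sum_univ_castSucc]
      simp only [hC1, hC2, hA, Matrix.of_apply, Fin.coe_castSucc, Fin.val_last,
        Fin.is_lt, dite_true, lt_irrefl, dite_false, Fin.eta, mul_zero, zero_mul, add_zero]
      exact Finset.sum_congr rfl fun l _ => by rw [pow_add]; ring
    rw [hfac, Matrix.det_mul]
    have : C1.det = 0 := Matrix.det_eq_zero_of_column_eq_zero (Fin.last n)
      (fun i => by simp only [hC1, Matrix.of_apply, Fin.val_last]; rw [dif_neg (lt_irrefl n)])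
    rw [this, zero_mul]
  have hminor : (A.updateCol (Fin.last n) (Pi.single (Fin.last n) (q.coeff m / p0))).det
      = (q.coeff m / p0) * An.det := by
    rw [Matrix.det_succ_column _ (Fin.last n)]
    rw [Finset.sum_eq_single (Fin.last n)]
    · rw [Matrix.updateCol_self, Pi.single_eq_same, Fin.val_last]
      have h1 : ((-1 : ℂ)) ^ (n + n) = 1 := Even.neg_one_pow ⟨n, rfl⟩
      rw [h1, one_mul]
      have hsub : (A.updateCol (Fin.last n) (Pi.single (Fin.last n) (q.coeff m / p0))).submatrix
          (Fin.last n).succAbove (Fin.last n).succAbove = An := by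
        ext i j
        simp only [Matrix.submatrix_apply, Fin.succAbove_last]
        rw [Matrix.updateCol_ne (Fin.castSucc_lt_last j).ne]
        simp only [hA, hAn, Matrix.of_apply, Fin.coe_castSucc]
      rw [hsub]
    · intro i _ hi
      rw [Matrix.updateCol_self, Pi.single_eq_of_ne hi, mul_zero, zero_mul]
    · intro h; exact absurd (Finset.mem_univ _) h
  have hMdet : Hdet t (n+1) = (q.coeff m / p0) * An.det := by
    unfold Hdet
    have hMeq : (Matrix.of fun i j : Fin (n+1) => t ((i:ℕ)+(j:ℕ)))
        = A.updateCol (Fin.last n)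
          ((fun i => A i (Fin.last n)) + Pi.single (Fin.last n) (q.coeff m / p0)) := by
      ext i j
      rw [Matrix.updateCol_apply]
      have hi := i.isLt
      have hj := j.isLt
      by_cases hjl : j = Fin.last n
      · subst hjl
        rw [if_pos rfl, Pi.add_apply]
        by_cases hil : i = Fin.last n
        · subst hil
          rw [Pi.single_eq_same]
          simp only [Matrix.of_apply, hA, Fin.val_last]
          rw [E1 (n+n) (by omega), if_pos (by omega)]
          ring
        · rw [Pi.single_eq_of_ne hil, add_zero]
          have hilt : (i:ℕ) < n := by
            rcases Nat.lt_or_ge (i:ℕ) n with h | h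
            · exact h
            · exact absurd (Fin.ext (by omega : (i:ℕ) = n)) hil
          simp only [Matrix.of_apply, hA, Fin.val_last]
          rw [E1 ((i:ℕ)+n) (by omega), if_neg (by omega), zero_add]
      · rw [if_neg hjl]
        have hjlt : (j:ℕ) < n := by
          rcases Nat.lt_or_ge (j:ℕ) n with h | h
          · exact h
          · exact absurd (Fin.ext (by omega : (j:ℕ) = n)) hjl
        simp only [Matrix.of_apply, hA]
        rw [E1 ((i:ℕ)+(j:ℕ)) (by omega), if_neg (by omega), zero_add]
    rw [hMeq, Matrix.det_updateCol_add, Matrix.updateCol_eq_self, hdetA, zero_add, hminor]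
  -- determinant of An
  have hdetAn : An.det = Δ^2 * ∏ l, d l := by
    have hfac : An = ((Matrix.vandermonde a).transpose * Matrix.diagonal d) *
        Matrix.vandermonde a := by
      ext i j
      rw [Matrix.mul_apply]
      simp only [hAn, Matrix.of_apply]
      refine Finset.sum_congr rfl fun l _ => ?_
      rw [Matrix.mul_diagonal, Matrix.transpose_apply, Matrix.vandermonde_apply,
        Matrix.vandermonde_apply, pow_add]
      ring
    rw [hfac, Matrix.det_mul, Matrix.det_mul, Matrix.det_transpose, Matrix.det_diagonal,
      Matrix.det_vandermonde]
    rw [← hΔ]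
    ring
  -- final assembly
  have hYne : (∏ l, ∏ j, (a l - x j)) ≠ 0 := Finset.prod_ne_zero_iff.2 fun l _ => hYl l
  have hQa : ∏ l, -(q.eval (a l)) = (-1:ℂ)^n * ∏ l, q.eval (a l) := by
    calc ∏ l, -(q.eval (a l)) = ∏ l : Fin n, ((-1:ℂ) * q.eval (a l)) :=
          Finset.prod_congr rfl fun l _ => by ring
      _ = _ := by
          rw [Finset.prod_mul_distrib, Finset.prod_const, Finset.card_univ, Fintype.card_fin]
  have hprodd : ∏ l, d l = ((-1:ℂ)^n * ∏ l, q.eval (a l)) /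
      (p0^n * ((-1:ℂ)^(n*(n-1)/2) * Δ^2) * ∏ l, ∏ j, (a l - x j)) := by
    simp only [hd]
    rw [Finset.prod_div_distrib, hQa]
    congr 1
    rw [Finset.prod_mul_distrib, Finset.prod_mul_distrib, Finset.prod_const, Finset.card_univ,
      Fintype.card_fin, prod_erase_sign n a, ← hΔ]
  have hsingle : ∀ l : Fin n, ∏ j, (x j - a l) = (-1:ℂ)^(m+n+1) * ∏ j, (a l - x j) := by
    intro l
    calc ∏ j, (x j - a l) = ∏ j : Fin (m+n+1), ((-1:ℂ) * (a l - x j)) :=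
          Finset.prod_congr rfl fun j _ => by ring
      _ = _ := by
          rw [Finset.prod_mul_distrib, Finset.prod_const, Finset.card_univ, Fintype.card_fin]
  have hprodp : ∏ j, (p0 * ∏ l, (x j - a l)) =
      p0^(m+n+1) * ((-1:ℂ)^((m+n+1)*n) * ∏ l, ∏ j, (a l - x j)) := by
    rw [Finset.prod_mul_distrib, Finset.prod_const, Finset.card_univ, Fintype.card_fin]
    congr 1
    rw [Finset.prod_comm]
    simp_rw [hsingle]
    rw [Finset.prod_mul_distrib, Finset.prod_const, Finset.card_univ, Fintype.card_fin, ← pow_mul]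
  have hid : n*(n+1)/2 = n*(n-1)/2 + n := by
    rcases n with _ | n'
    · rfl
    · have h1 : (n'+1)*((n'+1)+1) = (n'+1)*((n'+1)-1) + 2*(n'+1) := by
        simp only [Nat.add_sub_cancel]
        ring
      rw [h1, Nat.add_mul_div_left _ _ (by norm_num : 0 < 2)]
  have hsign : (-1:ℂ)^(m*n + n*(n+1)/2) = (-1:ℂ)^(n + (m+n+1)*n + n*(n-1)/2) := by
    have h2 : n + (m+n+1)*n + n*(n-1)/2 = (m*n + n*(n+1)/2) + n*(n+1) := by
      rw [hid]
      generalize n*(n-1)/2 = u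
      ring
    rw [h2, pow_add (-1 : ℂ) (m*n + n*(n+1)/2) (n*(n+1)),
      Even.neg_one_pow (Nat.even_mul_succ_self n), mul_one]
  constructor
  · rw [hMdet, hHn]
    field_simp
  · rw [hMdet, hdetAn, hprodd, hprodp, hsign]
    have hneg2 : ((-1:ℂ))^(n*(n-1)/2) * ((-1:ℂ))^(n*(n-1)/2) = 1 := by
      rw [← pow_add]
      exact Even.neg_one_pow ⟨n*(n-1)/2, rfl⟩
    field_simp [hp0, hΔne, hYne]
    linear_combination (-(q.coeff m * Δ^2 * (-1:ℂ)^n * (∏ l, q.eval (a l)) * p0^(m+n+1) *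
      (-1:ℂ)^((m+n+1)*n) * (∏ l, ∏ j, (a l - x j))) +
      (q.coeff m * ∏ l, q.eval (a l)) * p0 * p0^n * p0^m * ((-1:ℂ)^(n*2) * (-1:ℂ)^(n*m) * (-1:ℂ)^(n^2)) *
        (Δ^2 * (∏ l, ∏ j, (a l - x j)) - 1)) * hneg2

theorem hankel_det_succ_eq_resultant (n m N : ℕ) (hN : N = m + n + 1)
    (p q : Polynomial ℂ) (hpdeg : p.natDegree = n) (hqdeg : q.natDegree = m)
    (hp0 : p.leadingCoeff ≠ 0) (hq0 : q.leadingCoeff ≠ 0)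
    (x : Fin N → ℂ) (hx : Function.Injective x)
    (hpx : ∀ j, p.eval (x j) ≠ 0) (hqx : ∀ j, q.eval (x j) ≠ 0)
    (t : ℕ → ℂ)
    (ht : ∀ k, t k = ∑ j, (q.eval (x j) / p.eval (x j)) * x j ^ k / Wd x j) :
    Hdet t (n + 1) = q.leadingCoeff / p.leadingCoeff * Hdet t n ∧
    Hdet t (n + 1) =
      (-1 : ℂ) ^ (m * n + n * (n + 1) / 2) * q.leadingCoeff /
          (∏ j, p.eval (x j)) * Res p q := by
  classical
  subst hN
  have hq : q ≠ 0 := fun h => hq0 (by simp [h])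
  have hqc : q.leadingCoeff = q.coeff m := by rw [Polynomial.leadingCoeff, hqdeg]
  have hpne : p ≠ 0 := fun h => hp0 (by simp [h])
  have hsplits : p.Splits := IsAlgClosed.splits p
  have hcard : p.roots.card = n := by
    rw [← hpdeg]
    exact (Polynomial.splits_iff_card_roots.1 hsplits)
  set L : List ℂ := p.roots.toList with hL
  have hLlen : L.length = n := by rw [hL, Multiset.length_toList, hcard]
  set a : Fin n → ℂ := fun i => L.get (Fin.cast hLlen.symm i) with haL
  have hgen : ∀ {M : Type} [CommMonoid M] (f : ℂ → M),
      (p.roots.map f).prod = ∏ i, f (a i) := by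
    intro M _ f
    have h1 : p.roots = (L : Multiset ℂ) := by rw [hL, Multiset.coe_toList]
    rw [h1, Multiset.map_coe, Multiset.prod_coe, ← Fin.prod_univ_fun_getElem L f]
    refine Fintype.prod_equiv (finCongr hLlen) _ _ fun i => ?_
    simp [haL, List.get_eq_getElem]
  have hpfac : ∀ z : ℂ, p.eval z = p.leadingCoeff * ∏ i, (z - a i) := by
    intro z
    calc p.eval z
        = (Polynomial.C p.leadingCoeff * ∏ i, (Polynomial.X - Polynomial.C (a i))).eval z := by
          conv_lhs => rw [hsplits.eq_prod_roots,
            hgen (fun r => Polynomial.X - Polynomial.C r)]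
      _ = p.leadingCoeff * ∏ i, (z - a i) := by
          rw [Polynomial.eval_mul, Polynomial.eval_C, Polynomial.eval_prod]
          simp
  have hax0 : ∀ l j, a l ≠ x j := by
    intro l j h
    apply hpx j
    rw [hpfac (x j)]
    refine mul_eq_zero_of_right _ (Finset.prod_eq_zero (Finset.mem_univ l) ?_)
    rw [← h, sub_self]
  -- perturbation
  set c : Fin n → ℂ := fun l => (((l : ℕ) + 1 : ℕ) : ℂ) with hc
  have hcne : ∀ l, c l ≠ 0 := fun l => Nat.cast_ne_zero.2 (Nat.succ_ne_zero _)
  have hcinj : Function.Injective c := by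
    intro l l' h
    have : (l : ℕ) + 1 = (l' : ℕ) + 1 := Nat.cast_inj.1 h
    exact Fin.ext (by omega)
  set A : ℂ → Fin n → ℂ := fun ε l => a l + ε * c l with hA
  set tt : ℂ → ℕ → ℂ := fun ε k =>
    ∑ j, (q.eval (x j) / (p.leadingCoeff * ∏ l, (x j - A ε l))) * x j ^ k / Wd x j with htt
  set S : Set ℂ := {ε | Function.Injective (A ε) ∧ ∀ l j, A ε l ≠ x j} with hS
  have hgood : ∀ ε ∈ S,
      p.leadingCoeff * Hdet (tt ε) (n+1) = q.coeff m * Hdet (tt ε) n ∧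
      Hdet (tt ε) (n+1) * ∏ j, (p.leadingCoeff * ∏ l, (x j - A ε l)) =
        (-1:ℂ)^(m*n + n*(n+1)/2) * q.coeff m * p.leadingCoeff^m * ∏ l, q.eval (A ε l) := by
    rintro ε ⟨h1, h2⟩
    exact genG n m (m+n+1) rfl q hq hqdeg p.leadingCoeff hp0 x hx (A ε) h1 h2 (tt ε)
      (fun k => rfl)
  -- bad set
  have hSub1 : ∀ l l' : Fin n, ({ε : ℂ | l ≠ l' ∧ A ε l = A ε l'}).Subsingleton := by
    intro l l' ε1 h1 ε2 h2
    obtain ⟨hne, he1⟩ := h1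
    obtain ⟨-, he2⟩ := h2
    have hcc : c l - c l' ≠ 0 := sub_ne_zero.2 fun hcl => hne (hcinj hcl)
    have e1 : ε1 * (c l - c l') = a l' - a l := by
      simp only [hA] at he1; linear_combination he1
    have e2 : ε2 * (c l - c l') = a l' - a l := by
      simp only [hA] at he2; linear_combination he2
    exact mul_right_cancel₀ hcc (e1.trans e2.symm)
  have hSub2 : ∀ (l : Fin n) (j : Fin (m+n+1)), ({ε : ℂ | A ε l = x j}).Subsingleton := by
    intro l j ε1 h1 ε2 h2
    simp only [Set.mem_setOf_eq, hA] at h1 h2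
    have e1 : ε1 * c l = x j - a l := by linear_combination h1
    have e2 : ε2 * c l = x j - a l := by linear_combination h2
    exact mul_right_cancel₀ (hcne l) (e1.trans e2.symm)
  set B : Set ℂ := (⋃ l, ⋃ l', {ε : ℂ | l ≠ l' ∧ A ε l = A ε l'}) ∪
      ⋃ l, ⋃ j, {ε : ℂ | A ε l = x j} with hB
  have hBfin : B.Finite := by
    refine Set.Finite.union ?_ ?_ <;>
      refine Set.finite_iUnion fun l => Set.finite_iUnion fun w => ?_
    · exact (hSub1 l w).finite
    · exact (hSub2 l w).finite
  have hBS : ∀ ε, ε ∉ B → ε ∈ S := by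
    intro ε hε
    simp only [hB, Set.mem_union, Set.mem_iUnion, not_or, not_exists] at hε
    constructor
    · intro l l' hll
      by_contra hne
      exact hε.1 l l' ⟨hne, hll⟩
    · intro l j hlj
      exact hε.2 l j hlj
  -- value at 0
  have hA0 : ∀ l, A 0 l = a l := fun l => by simp [hA]
  have htt0 : tt 0 = t := by
    funext k
    rw [ht k]
    refine Finset.sum_congr rfl fun j _ => ?_
    rw [hpfac (x j)]
    simp [hA]
  have hpev0 : ∀ j, p.leadingCoeff * ∏ l, (x j - A 0 l) = p.eval (x j) := by
    intro j
    rw [hpfac (x j)]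
    simp [hA]
  -- continuity facts
  have hPcont : ∀ j, ContinuousAt (fun ε => p.leadingCoeff * ∏ l, (x j - A ε l)) 0 := by
    intro j
    refine ContinuousAt.mul continuousAt_const ?_
    refine (continuous_finset_prod Finset.univ fun l _ => ?_).continuousAt
    exact continuous_const.sub (continuous_const.add (continuous_id.mul continuous_const))
  have httcont : ∀ k, ContinuousAt (fun ε => tt ε k) 0 := by
    intro k
    have hterm : ∀ j, ContinuousAt (fun ε =>
        (q.eval (x j) / (p.leadingCoeff * ∏ l, (x j - A ε l))) * x j ^ k / Wd x j) 0 := by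
      intro j
      refine ContinuousAt.div_const (ContinuousAt.mul ?_ continuousAt_const) _
      refine ContinuousAt.div continuousAt_const (hPcont j) ?_
      rw [hpev0 j]; exact hpx j
    exact tendsto_finset_sum _ fun j _ => hterm j
  have hdetcont : ∀ K : ℕ, ContinuousAt (fun ε => Hdet (tt ε) K) 0 := by
    intro K
    have h1 : Continuous fun M : Matrix (Fin K) (Fin K) ℂ => M.det :=
      Continuous.matrix_det continuous_id
    have h2 : ContinuousAt (fun ε => (Matrix.of fun i j : Fin K => tt ε ((i:ℕ)+(j:ℕ)))) 0 :=
      continuousAt_pi.2 fun i => continuousAt_pi.2 fun j => httcont _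
    have := h1.continuousAt.comp h2
    simpa [Function.comp_def, Hdet] using this
  have hqacont : ContinuousAt (fun ε => ∏ l, q.eval (A ε l)) 0 := by
    refine (continuous_finset_prod Finset.univ fun l _ => ?_).continuousAt
    exact (Polynomial.continuous q).comp (continuous_const.add (continuous_id.mul continuous_const))
  have hPPcont : ContinuousAt (fun ε => ∏ j, (p.leadingCoeff * ∏ l, (x j - A ε l))) 0 :=
    tendsto_finset_prod _ fun j _ => hPcont j
  -- the punctured limit filter
  set U : Set ℂ := (B \ {0})ᶜ with hU
  have hUopen : IsOpen U := (Set.Finite.isClosed (hBfin.subset Set.diff_subset)).isOpen_compl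
  have hU0 : (0:ℂ) ∈ U := by simp [hU]
  have hUnhds : U ∈ nhds (0:ℂ) := hUopen.mem_nhds hU0
  have hfil : nhdsWithin (0:ℂ) (U \ {0}) = nhdsWithin (0:ℂ) {(0:ℂ)}ᶜ := by
    rw [Set.diff_eq]
    exact nhdsWithin_inter_of_mem (mem_nhdsWithin_of_mem_nhds hUnhds)
  have hNeBot : (nhdsWithin (0:ℂ) (U \ {0})).NeBot := by
    rw [hfil]; infer_instance
  have hmemS : ∀ ε ∈ U \ {0}, ε ∈ S := by
    rintro ε ⟨hεU, hε0⟩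
    refine hBS ε fun hεB => ?_
    exact hεU ⟨hεB, hε0⟩
  -- generic zero-limit principle
  have hzero : ∀ G : ℂ → ℂ, ContinuousAt G 0 → (∀ ε ∈ S, G ε = 0) → G 0 = 0 := by
    intro G hG hGS
    have h1 : Filter.Tendsto G (nhdsWithin (0:ℂ) (U \ {0})) (nhds (G 0)) :=
      hG.tendsto.mono_left nhdsWithin_le_nhds
    have h2 : Filter.Tendsto G (nhdsWithin (0:ℂ) (U \ {0})) (nhds 0) := by
      refine Filter.Tendsto.congr' ?_ tendsto_const_nhds
      filter_upwards [self_mem_nhdsWithin] with ε hε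
      exact (hGS ε (hmemS ε hε)).symm
    exact tendsto_nhds_unique h1 h2
  -- apply to the two identities
  have hF1 : p.leadingCoeff * Hdet t (n+1) = q.coeff m * Hdet t n := by
    have hz := hzero (fun e => p.leadingCoeff * Hdet (tt e) (n+1) - q.coeff m * Hdet (tt e) n)
      (((hdetcont (n+1)).const_mul _).sub ((hdetcont n).const_mul _))
      (fun e he => sub_eq_zero.2 ((hgood e he).1))
    simp only [htt0] at hz
    exact sub_eq_zero.1 hz
  have hF2 : Hdet t (n+1) * ∏ j, p.eval (x j) =
      (-1:ℂ)^(m*n + n*(n+1)/2) * q.coeff m * p.leadingCoeff^m * ∏ l, q.eval (a l) := by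
    have hz := hzero (fun e => Hdet (tt e) (n+1) * ∏ j, (p.leadingCoeff * ∏ l, (x j - A e l)) -
        (-1:ℂ)^(m*n + n*(n+1)/2) * q.coeff m * p.leadingCoeff^m * ∏ l, q.eval (A e l))
      (((hdetcont (n+1)).mul hPPcont).sub (hqacont.const_mul _))
      (fun e he => sub_eq_zero.2 ((hgood e he).2))
    simp only [htt0] at hz
    have h2 := sub_eq_zero.1 hz
    rw [Finset.prod_congr rfl (fun j _ => hpev0 j)] at h2
    have h3 : ∏ l, q.eval (A 0 l) = ∏ l, q.eval (a l) :=
      Finset.prod_congr rfl fun l _ => by rw [hA0 l]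
    rw [h3] at h2
    exact h2
  have hpxne : (∏ j, p.eval (x j)) ≠ 0 := Finset.prod_ne_zero_iff.2 fun j _ => hpx j
  have hRes : Res p q = p.leadingCoeff ^ m * ∏ i, q.eval (a i) := by
    rw [Res, hqdeg, hgen (fun r => q.eval r)]
  constructor
  · rw [div_mul_eq_mul_div, eq_div_iff hp0, hqc]
    linear_combination hF1
  · rw [div_mul_eq_mul_div, eq_div_iff hpxne, hRes, hqc]
    linear_combination hF2
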